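/- For the two-qudit GHZ state ρ_ghz = |GHZ⟩⟨GHZ| on ℂ^d⊗ℂ^d (d ≥ 2), where |GHZ⟩ = (1/√d)Σ_{k=1}^{d}|k⟩⊗|k⟩ in the standard basis, the geometric quantum discord equals D_g(ρ_ghz) = (d−1)/d. -/

import Mathlib

open Matrix Finset
open scoped Kronecker ComplexOrder

noncomputable section

/-- A quantum state: a positive semidefinite (hence Hermitian) matrix of trace 1. -/
def IsState {n : Type*} [Fintype n] (ρ : Matrix n n ℂ) : Prop :=
  ρ.PosSemidef ∧ ρ.trace = 1

/-- The pure state (rank-one projection) associated with a vector `ψ`. -/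
def pureState {n : Type*} (ψ : n → ℂ) : Matrix n n ℂ :=
  Matrix.vecMulVec ψ (star ψ)

/-- A Bloch basis for `d × d` complex matrices: a family of nonzero traceless Hermitian
matrices with `tr[Υ k * Υ m] = 2 δ_{km}`. -/
def IsBlochBasis (d : ℕ) (Υ : Fin (d ^ 2 - 1) → Matrix (Fin d) (Fin d) ℂ) : Prop :=
  (∀ k, Υ k ≠ 0) ∧ (∀ k, (Υ k).IsHermitian) ∧ (∀ k, (Υ k).trace = 0) ∧
    (∀ k m, (Υ k * Υ m).trace = if k = m then 2 else 0)

/-- The Bloch vector of a state `ρ` on `ℂ^d` relative to a Bloch basis `Υ`. -/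
def blochVector {d : ℕ} (ρ : Matrix (Fin d) (Fin d) ℂ)
    (Υ : Fin (d ^ 2 - 1) → Matrix (Fin d) (Fin d) ℂ) : Fin (d ^ 2 - 1) → ℝ :=
  fun k => Real.sqrt ((d : ℝ) / (2 * ((d : ℝ) - 1))) * ((ρ * Υ k).trace).re

/-- Partial trace over the first tensor factor. -/
def ptrace1 {d₁ d₂ : ℕ} (ρ : Matrix (Fin d₁ × Fin d₂) (Fin d₁ × Fin d₂) ℂ) :
    Matrix (Fin d₂) (Fin d₂) ℂ :=
  Matrix.of fun j j' => ∑ i, ρ (i, j) (i, j')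

/-- Partial trace over the second tensor factor. -/
def ptrace2 {d₁ d₂ : ℕ} (ρ : Matrix (Fin d₁ × Fin d₂) (Fin d₁ × Fin d₂) ℂ) :
    Matrix (Fin d₁) (Fin d₁) ℂ :=
  Matrix.of fun i i' => ∑ j, ρ (i, j) (i', j)

/-- Partial transpose with respect to the second tensor factor. -/
def ptranspose2 {d₁ d₂ : ℕ} (ρ : Matrix (Fin d₁ × Fin d₂) (Fin d₁ × Fin d₂) ℂ) :
    Matrix (Fin d₁ × Fin d₂) (Fin d₁ × Fin d₂) ℂ :=
  Matrix.of fun p q => ρ (p.1, q.2) (q.1, p.2)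

/-- The correlation matrix of a two-qudit state, `T^{ij} = tr[ρ (Υ₁ i ⊗ Υ₂ j)]`. -/
def corrMatrix {d₁ d₂ : ℕ} (ρ : Matrix (Fin d₁ × Fin d₂) (Fin d₁ × Fin d₂) ℂ)
    (Υ₁ : Fin (d₁ ^ 2 - 1) → Matrix (Fin d₁) (Fin d₁) ℂ)
    (Υ₂ : Fin (d₂ ^ 2 - 1) → Matrix (Fin d₂) (Fin d₂) ℂ) :
    Matrix (Fin (d₁ ^ 2 - 1)) (Fin (d₂ ^ 2 - 1)) ℝ :=
  Matrix.of fun i j => ((ρ * (Υ₁ i ⊗ₖ Υ₂ j)).trace).re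

/-- A quantum-classical state `χ = Σ_k α_k σ_k ⊗ |k⟩⟨k|`. -/
def IsQCState {d₁ d₂ : ℕ} (χ : Matrix (Fin d₁ × Fin d₂) (Fin d₁ × Fin d₂) ℂ) : Prop :=
  ∃ (α : Fin d₂ → ℝ) (σ : Fin d₂ → Matrix (Fin d₁) (Fin d₁) ℂ) (e : Fin d₂ → Fin d₂ → ℂ),
    (∀ k, 0 ≤ α k) ∧ (∑ k, α k = 1) ∧ (∀ k, IsState (σ k)) ∧
    (∀ k l, ∑ i, star (e k i) * e l i = if k = l then (1 : ℂ) else 0) ∧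
    χ = ∑ k, (α k : ℂ) • (σ k ⊗ₖ pureState (e k))

/-- The geometric quantum discord (with the Hilbert–Schmidt distance):
`D_g(ρ) = min over quantum-classical χ of tr[(ρ - χ)²]`. -/
def Dg {d₁ d₂ : ℕ} (ρ : Matrix (Fin d₁ × Fin d₂) (Fin d₁ × Fin d₂) ℂ) : ℝ :=
  sInf {x : ℝ | ∃ χ, IsQCState χ ∧ x = (((ρ - χ) * (ρ - χ)).trace).re}

/-- `η` lists the eigenvalues of the real matrix `G` in decreasing order with algebraic
multiplicities: `η` is antitone and the characteristic polynomial of `G` splits as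
`∏ (X - η n)`. -/
def IsEigList {N : ℕ} (G : Matrix (Fin N) (Fin N) ℝ) (η : Fin N → ℝ) : Prop :=
  Antitone η ∧ G.charpoly = ∏ n, (Polynomial.X - Polynomial.C (η n))

/-- A simplex frame in `ℝ^N`: `d` unit vectors summing to zero with pairwise scalar
products `-1/(d-1)`. -/
def IsSimplexFrame {N : ℕ} (d : ℕ) (y : Fin d → Fin N → ℝ) : Prop :=
  (∀ k, ∑ i, y k i ^ 2 = 1) ∧ (∀ i, ∑ k, y k i = 0) ∧
    (∀ j k, j ≠ k → ∑ i, y j i * y k i = -1 / ((d : ℝ) - 1))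

/-- The operator `Π_{Ω_y} = ((d-1)/d) Σ_k y_k y_kᵀ` associated with a simplex frame. -/
def simplexProj {N : ℕ} (d : ℕ) (y : Fin d → Fin N → ℝ) : Matrix (Fin N) (Fin N) ℝ :=
  (((d : ℝ) - 1) / d) • ∑ k, Matrix.vecMulVec (y k) (y k)

/-- The matrix `G(ρ) = ((d₂-1)/(d₁ d₂)) r₂ r₂ᵀ + (1/4) T_ρᵀ T_ρ`. -/
def Gmat {d₁ d₂ : ℕ} (ρ : Matrix (Fin d₁ × Fin d₂) (Fin d₁ × Fin d₂) ℂ)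
    (Υ₁ : Fin (d₁ ^ 2 - 1) → Matrix (Fin d₁) (Fin d₁) ℂ)
    (Υ₂ : Fin (d₂ ^ 2 - 1) → Matrix (Fin d₂) (Fin d₂) ℂ) :
    Matrix (Fin (d₂ ^ 2 - 1)) (Fin (d₂ ^ 2 - 1)) ℝ :=
  (((d₂ : ℝ) - 1) / (d₁ * d₂)) •
      Matrix.vecMulVec (blochVector (ptrace1 ρ) Υ₂) (blochVector (ptrace1 ρ) Υ₂)
    + (4 : ℝ)⁻¹ • ((corrMatrix ρ Υ₁ Υ₂)ᵀ * corrMatrix ρ Υ₁ Υ₂)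

/-- The trace norm (sum of singular values) of a complex square matrix. -/
def traceNorm {n : Type*} [Fintype n] [DecidableEq n] (X : Matrix n n ℂ) : ℝ :=
  ∑ i, Real.sqrt ((Matrix.posSemidef_conjTranspose_mul_self X).1.eigenvalues i)

/-- The negativity `N_ρ = (‖ρ^{T₂}‖₁ - 1)/2`. -/
def negativity {d₁ d₂ : ℕ} (ρ : Matrix (Fin d₁ × Fin d₂) (Fin d₁ × Fin d₂) ℂ) : ℝ :=
  (traceNorm (ptranspose2 ρ) - 1) / 2

/-- The concurrence of a pure two-qudit state, `C = √(2 (1 - tr[ρ₁²]))`, `ρ₁ = tr₂ ρ`. -/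
def concurrence {d₁ d₂ : ℕ} (ρ : Matrix (Fin d₁ × Fin d₂) (Fin d₁ × Fin d₂) ℂ) : ℝ :=
  Real.sqrt (2 * (1 - ((ptrace2 ρ * ptrace2 ρ).trace).re))

end

namespace Stmt6Aux

noncomputable def ψv (d : ℕ) : Fin d × Fin d → ℂ :=
  fun p => if p.1 = p.2 then (((Real.sqrt d)⁻¹ : ℝ) : ℂ) else 0

noncomputable def tval {d : ℕ} (σ : Matrix (Fin d) (Fin d) ℂ) (e : Fin d → ℂ) : ℂ :=
  ∑ j, ∑ i, σ j i * (e j * star (e i))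

noncomputable def sval {d : ℕ} (σ : Matrix (Fin d) (Fin d) ℂ) : ℝ :=
  ∑ j, ∑ i, Complex.normSq (σ j i)

lemma trace_mul_apply' {n : Type*} [Fintype n] (A B : Matrix n n ℂ) :
    (A * B).trace = ∑ p, ∑ q, A p q * B q p := by
  simp [Matrix.trace, Matrix.mul_apply, Matrix.diag]

lemma csq {d : ℕ} (hd : 0 < d) :
    ((((Real.sqrt d)⁻¹ : ℝ) : ℂ)) * ((((Real.sqrt d)⁻¹ : ℝ)) : ℂ) = (d : ℂ)⁻¹ := by
  have h1 : ((Real.sqrt d)⁻¹ : ℝ) * ((Real.sqrt d)⁻¹ : ℝ) = (d : ℝ)⁻¹ := by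
    rw [← mul_inv, Real.mul_self_sqrt (by positivity)]
  rw [← Complex.ofReal_mul, h1]
  push_cast
  rfl

lemma star_psiv {d : ℕ} (p : Fin d × Fin d) : star (ψv d p) = ψv d p := by
  unfold ψv
  split <;> simp

lemma sum_psi {d : ℕ} (g : Fin d × Fin d → ℂ) :
    ∑ p, ψv d p * g p = ∑ i, (((Real.sqrt d)⁻¹ : ℝ) : ℂ) * g (i, i) := by
  rw [Fintype.sum_prod_type]
  refine Finset.sum_congr rfl fun i _ => ?_
  simp [ψv, ite_mul, Finset.sum_ite_eq, Finset.mem_univ]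

lemma trace_psi_mul {d : ℕ} (hd : 0 < d) (M : Matrix (Fin d × Fin d) (Fin d × Fin d) ℂ) :
    (pureState (ψv d) * M).trace = (d : ℂ)⁻¹ * ∑ i, ∑ j, M (j, j) (i, i) := by
  rw [trace_mul_apply']
  have key : ∀ p q : Fin d × Fin d, pureState (ψv d) p q * M q p
      = ψv d p * (ψv d q * M q p) := by
    intro p q
    simp [pureState, vecMulVec_apply, star_psiv, mul_assoc]
  simp_rw [key]
  simp_rw [← Finset.mul_sum]
  rw [sum_psi (fun p => ∑ q, ψv d q * M q p)]
  simp_rw [sum_psi, Finset.mul_sum, ← mul_assoc, csq hd]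


lemma trace_rho_sq {d : ℕ} (hd : 0 < d) :
    (pureState (ψv d) * pureState (ψv d)).trace = 1 := by
  rw [trace_psi_mul hd]
  have : ∀ i j : Fin d, pureState (ψv d) (j, j) (i, i)
      = (((Real.sqrt d)⁻¹ : ℝ) : ℂ) * (((Real.sqrt d)⁻¹ : ℝ) : ℂ) := by
    intro i j
    simp [pureState, vecMulVec_apply, star_psiv, ψv]
  simp_rw [this, csq hd, Finset.sum_const, Finset.card_univ, Fintype.card_fin, nsmul_eq_mul]
  have hdC : (d : ℂ) ≠ 0 := Nat.cast_ne_zero.mpr hd.ne'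
  field_simp

lemma trace_pure_mul_pure {d : ℕ} (e : Fin d → Fin d → ℂ)
    (he : ∀ k l, ∑ i, star (e k i) * e l i = if k = l then (1 : ℂ) else 0) (k l : Fin d) :
    (pureState (e k) * pureState (e l)).trace = if k = l then (1 : ℂ) else 0 := by
  rw [trace_mul_apply']
  have : ∀ a b, pureState (e k) a b * pureState (e l) b a
      = (e k a * star (e l a)) * (star (e k b) * e l b) := by
    intro a b
    simp only [pureState, vecMulVec_apply, Pi.star_apply]
    ring
  simp_rw [this, ← Finset.mul_sum, ← Finset.sum_mul]
  have h1 : ∑ a, e k a * star (e l a) = if k = l then (1 : ℂ) else 0 := by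
    have h2 : ∑ a, e k a * star (e l a) = star (∑ a, star (e k a) * e l a) := by
      rw [star_sum]
      refine Finset.sum_congr rfl fun a _ => ?_
      simp [mul_comm]
    rw [h2, he k l]
    split <;> simp
  rw [h1, he k l]
  split <;> simp

lemma trace_sq_of_herm {d : ℕ} (σ : Matrix (Fin d) (Fin d) ℂ) (h : σ.IsHermitian) :
    (σ * σ).trace = ((sval σ : ℝ) : ℂ) := by
  rw [trace_mul_apply']
  have : ∀ j i, σ j i * σ i j = ((Complex.normSq (σ j i) : ℝ) : ℂ) := by
    intro j i
    have hs : σ i j = star (σ j i) := (h.apply i j).symm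
    rw [hs]
    simp [Complex.star_def, Complex.mul_conj]
  simp_rw [this, sval]
  push_cast
  rfl


lemma trace_rho_chi {d : ℕ} (hd : 0 < d) (α : Fin d → ℝ)
    (σ : Fin d → Matrix (Fin d) (Fin d) ℂ) (e : Fin d → Fin d → ℂ) :
    (pureState (ψv d) * ∑ k, (α k : ℂ) • (σ k ⊗ₖ pureState (e k))).trace
      = (d : ℂ)⁻¹ * ∑ k, (α k : ℂ) * tval (σ k) (e k) := by
  rw [trace_psi_mul hd]
  congr 1
  have : ∀ i j : Fin d, (∑ k, (α k : ℂ) • (σ k ⊗ₖ pureState (e k))) (j, j) (i, i)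
      = ∑ k, (α k : ℂ) * (σ k j i * (e k j * star (e k i))) := by
    intro i j
    rw [Matrix.sum_apply]
    refine Finset.sum_congr rfl fun k _ => ?_
    simp [Matrix.smul_apply, Matrix.kroneckerMap_apply, pureState, vecMulVec_apply,
      smul_eq_mul, mul_assoc]
  simp_rw [this]
  have h1 : ∀ i : Fin d, (∑ j, ∑ k, (α k : ℂ) * (σ k j i * (e k j * star (e k i))))
      = ∑ k, ∑ j, (α k : ℂ) * (σ k j i * (e k j * star (e k i))) := fun i => Finset.sum_comm
  simp_rw [h1]
  rw [Finset.sum_comm]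
  refine Finset.sum_congr rfl fun k _ => ?_
  simp_rw [← Finset.mul_sum]
  congr 1
  exact Finset.sum_comm

lemma trace_chi_sq {d : ℕ} (α : Fin d → ℝ)
    (σ : Fin d → Matrix (Fin d) (Fin d) ℂ) (e : Fin d → Fin d → ℂ)
    (hσ : ∀ k, (σ k).IsHermitian)
    (he : ∀ k l, ∑ i, star (e k i) * e l i = if k = l then (1 : ℂ) else 0) :
    ((∑ k, (α k : ℂ) • (σ k ⊗ₖ pureState (e k))) *
        (∑ k, (α k : ℂ) • (σ k ⊗ₖ pureState (e k)))).trace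
      = ∑ k, ((α k : ℂ))^2 * ((sval (σ k) : ℝ) : ℂ) := by
  rw [Finset.sum_mul_sum]
  rw [Matrix.trace_sum]
  simp_rw [Matrix.trace_sum]
  have : ∀ k l, (((α k : ℂ) • (σ k ⊗ₖ pureState (e k))) *
      ((α l : ℂ) • (σ l ⊗ₖ pureState (e l)))).trace
      = (α k : ℂ) * (α l : ℂ) * ((σ k * σ l).trace * (if k = l then (1:ℂ) else 0)) := by
    intro k l
    rw [Matrix.smul_mul, Matrix.mul_smul, ← Matrix.mul_kronecker_mul,
      Matrix.trace_smul, Matrix.trace_smul, Matrix.trace_kronecker,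
      trace_pure_mul_pure e he k l]
    simp [smul_eq_mul]
    ring
  simp_rw [this]
  refine Finset.sum_congr rfl fun k _ => ?_
  rw [Finset.sum_eq_single k]
  · rw [trace_sq_of_herm (σ k) (hσ k)]
    simp only [if_true]
    ring
  · intro l _ hl
    simp [Ne.symm hl]
  · simp


lemma expansion {d : ℕ} (hd : 0 < d) (α : Fin d → ℝ)
    (σ : Fin d → Matrix (Fin d) (Fin d) ℂ) (e : Fin d → Fin d → ℂ)
    (hσ : ∀ k, (σ k).IsHermitian)
    (he : ∀ k l, ∑ i, star (e k i) * e l i = if k = l then (1 : ℂ) else 0) :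
    (((pureState (ψv d) - ∑ k, (α k : ℂ) • (σ k ⊗ₖ pureState (e k))) *
        (pureState (ψv d) - ∑ k, (α k : ℂ) • (σ k ⊗ₖ pureState (e k)))).trace).re
      = 1 - (2 / d) * ∑ k, α k * (tval (σ k) (e k)).re + ∑ k, (α k)^2 * sval (σ k) := by
  set ρ := pureState (ψv d) with hρ
  set χ := ∑ k, (α k : ℂ) • (σ k ⊗ₖ pureState (e k)) with hχ
  have hexp : (ρ - χ) * (ρ - χ) = ρ * ρ - ρ * χ - χ * ρ + χ * χ := by noncomm_ring
  rw [hexp, Matrix.trace_add, Matrix.trace_sub, Matrix.trace_sub,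
    Matrix.trace_mul_comm χ ρ, hρ, hχ, trace_rho_sq hd, trace_rho_chi hd α σ e,
    trace_chi_sq α σ e hσ he]
  have hinv : (d : ℂ)⁻¹ = (((d : ℝ)⁻¹ : ℝ) : ℂ) := by push_cast; rfl
  rw [hinv]
  simp only [Complex.add_re, Complex.sub_re, Complex.one_re, Complex.re_ofReal_mul,
    Complex.re_sum]
  have h2 : ∀ k, ((α k : ℂ) * tval (σ k) (e k)).re = α k * (tval (σ k) (e k)).re :=
    fun k => Complex.re_ofReal_mul _ _
  have h3 : ∀ k, (((α k : ℂ))^2 * ((sval (σ k) : ℝ) : ℂ)).re = (α k)^2 * sval (σ k) := by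
    intro k
    rw [← Complex.ofReal_pow, Complex.re_ofReal_mul, Complex.ofReal_re]
  simp_rw [h3]
  ring

lemma tval_re_le {d : ℕ} (σ : Matrix (Fin d) (Fin d) ℂ) (e : Fin d → ℂ)
    (he : ∑ i, Complex.normSq (e i) = 1) :
    (tval σ e).re ≤ Real.sqrt (sval σ) := by
  have hB : ‖tval σ e‖ ≤ ∑ j, ∑ i, ‖σ j i‖ * (‖e j‖ * ‖e i‖) := by
    refine (norm_sum_le _ _).trans ?_
    refine Finset.sum_le_sum fun j _ => ?_
    refine (norm_sum_le _ _).trans ?_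
    refine Finset.sum_le_sum fun i _ => ?_
    simp [norm_mul]
  set B := ∑ j, ∑ i, ‖σ j i‖ * (‖e j‖ * ‖e i‖) with hBdef
  have hB0 : 0 ≤ B := by positivity
  have hcs : B ^ 2 ≤ sval σ := by
    have h1 : (∑ p : Fin d × Fin d, ‖σ p.1 p.2‖ * (‖e p.1‖ * ‖e p.2‖)) = B := by
      rw [hBdef, Fintype.sum_prod_type]
    have h2 := Finset.sum_mul_sq_le_sq_mul_sq Finset.univ
      (fun p : Fin d × Fin d => ‖σ p.1 p.2‖) (fun p : Fin d × Fin d => ‖e p.1‖ * ‖e p.2‖)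
    have h3 : ∑ p : Fin d × Fin d, ‖σ p.1 p.2‖ ^ 2 = sval σ := by
      rw [Fintype.sum_prod_type, sval]
      simp_rw [Complex.sq_norm]
    have h4 : ∑ p : Fin d × Fin d, (‖e p.1‖ * ‖e p.2‖) ^ 2 = 1 := by
      rw [Fintype.sum_prod_type]
      have hn : ∀ i, ‖e i‖ ^ 2 = Complex.normSq (e i) := by
        intro i
        rw [Complex.sq_norm]
      simp_rw [mul_pow, hn, ← Finset.mul_sum, he, mul_one, he]
    rw [← h1]
    calc (∑ p : Fin d × Fin d, ‖σ p.1 p.2‖ * (‖e p.1‖ * ‖e p.2‖)) ^ 2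
        ≤ (∑ p : Fin d × Fin d, ‖σ p.1 p.2‖ ^ 2) * ∑ p : Fin d × Fin d, (‖e p.1‖ * ‖e p.2‖) ^ 2 := h2
      _ = sval σ := by rw [h3, h4, mul_one]
  have hs0 : 0 ≤ sval σ :=
    Finset.sum_nonneg fun _ _ => Finset.sum_nonneg fun _ _ => Complex.normSq_nonneg _
  have hBs : B ≤ Real.sqrt (sval σ) := (Real.le_sqrt hB0 hs0).mpr hcs
  exact le_trans (Complex.re_le_norm _) (le_trans hB hBs)


lemma perk {d : ℕ} (hd : 0 < d) (a t s : ℝ) (ha : 0 ≤ a) (hs : 0 ≤ s)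
    (ht : t ≤ Real.sqrt s) : (2 / d) * (a * t) - a ^ 2 * s ≤ 1 / (d : ℝ) ^ 2 := by
  set u := Real.sqrt s with hu
  have hu0 : 0 ≤ u := Real.sqrt_nonneg s
  have hs' : s = u ^ 2 := (Real.sq_sqrt hs).symm
  have hd' : (0 : ℝ) < d := Nat.cast_pos.mpr hd
  have h1 : (2 / d) * (a * t) ≤ (2 / d) * (a * u) := by
    apply mul_le_mul_of_nonneg_left _ (by positivity)
    exact mul_le_mul_of_nonneg_left ht ha
  have hdd : (0 : ℝ) < (d : ℝ) ^ 2 := by positivity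
  have h3 : 2 * (a * u) * d ≤ (a * u) ^ 2 * (d : ℝ) ^ 2 + 1 := by
    nlinarith [sq_nonneg (a * u * d - 1)]
  have h2 : (2 / d) * (a * u) - a ^ 2 * u ^ 2 ≤ 1 / (d : ℝ) ^ 2 := by
    have e1 : 2 / (d : ℝ) * (a * u) - a ^ 2 * u ^ 2
        = (2 * (a * u) * d - (a * u) ^ 2 * (d : ℝ) ^ 2) / (d : ℝ) ^ 2 := by
      field_simp
    rw [e1, div_le_div_iff₀ hdd hdd]
    nlinarith [h3]
  rw [hs']
  linarith

lemma sval_nonneg {d : ℕ} (σ : Matrix (Fin d) (Fin d) ℂ) : 0 ≤ sval σ :=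
  Finset.sum_nonneg fun _ _ => Finset.sum_nonneg fun _ _ => Complex.normSq_nonneg _

lemma e_normalized {d : ℕ} (e : Fin d → Fin d → ℂ)
    (he : ∀ k l, ∑ i, star (e k i) * e l i = if k = l then (1 : ℂ) else 0) (k : Fin d) :
    ∑ i, Complex.normSq (e k i) = 1 := by
  have h := he k k
  simp only [if_true] at h
  have h2 : ∀ i, star (e k i) * e k i = ((Complex.normSq (e k i) : ℝ) : ℂ) := by
    intro i
    rw [mul_comm]
    simp [Complex.star_def, Complex.mul_conj]
  rw [show (∑ i, star (e k i) * e k i) = ∑ i, ((Complex.normSq (e k i) : ℝ) : ℂ) from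
    Finset.sum_congr rfl fun i _ => h2 i] at h
  rw [← Complex.ofReal_sum] at h
  exact_mod_cast h

lemma lowbd {d : ℕ} (hd : 0 < d) (α : Fin d → ℝ)
    (σ : Fin d → Matrix (Fin d) (Fin d) ℂ) (e : Fin d → Fin d → ℂ)
    (hα : ∀ k, 0 ≤ α k)
    (he : ∀ k l, ∑ i, star (e k i) * e l i = if k = l then (1 : ℂ) else 0) :
    ((d : ℝ) - 1) / d ≤
      1 - (2 / d) * ∑ k, α k * (tval (σ k) (e k)).re + ∑ k, (α k)^2 * sval (σ k) := by
  have hd' : (0 : ℝ) < d := Nat.cast_pos.mpr hd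
  have key : ∑ k, ((2 / (d:ℝ)) * (α k * (tval (σ k) (e k)).re) - (α k)^2 * sval (σ k))
      ≤ ∑ _k : Fin d, 1 / (d : ℝ) ^ 2 := by
    refine Finset.sum_le_sum fun k _ => ?_
    exact perk hd (α k) _ _ (hα k) (sval_nonneg _)
      (tval_re_le (σ k) (e k) (e_normalized e he k))
  rw [Finset.sum_const, Finset.card_univ, Fintype.card_fin, nsmul_eq_mul] at key
  rw [Finset.sum_sub_distrib, ← Finset.mul_sum] at key
  have hc : (d : ℝ) * (1 / (d : ℝ) ^ 2) = 1 / d := by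
    field_simp
  rw [hc] at key
  have hgoal : ((d : ℝ) - 1) / d = 1 - 1 / d := by
    field_simp
  rw [hgoal]
  linarith


lemma pureState_posSemidef {n : Type*} [Fintype n] (v : n → ℂ) :
    (pureState v).PosSemidef := by
  refine Matrix.PosSemidef.of_dotProduct_mulVec_nonneg ?_ ?_
  · ext i j
    simp [pureState, vecMulVec_apply, Matrix.conjTranspose_apply, mul_comm]
  · intro x
    have hmv : ∀ j, (pureState v *ᵥ x) j = v j * ∑ i, star (v i) * x i := by
      intro j
      simp [Matrix.mulVec, dotProduct, pureState, vecMulVec_apply, Finset.mul_sum, mul_assoc]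
    have hx : star x ⬝ᵥ (pureState v) *ᵥ x
        = star (∑ i, star (v i) * x i) * (∑ i, star (v i) * x i) := by
      simp only [dotProduct, hmv, Pi.star_apply]
      rw [star_sum, Finset.sum_mul]
      refine Finset.sum_congr rfl fun j _ => ?_
      simp only [star_mul', star_star]
      ring
    rw [hx]
    exact star_mul_self_nonneg _

noncomputable def eb {d : ℕ} (k : Fin d) : Fin d → ℂ := fun i => if i = k then 1 else 0

lemma he_basis {d : ℕ} : ∀ k l : Fin d,
    ∑ i, star (eb k i) * eb l i = if k = l then (1 : ℂ) else 0 := by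
  intro k l
  simp only [eb, apply_ite (star : ℂ → ℂ), star_one, star_zero, ite_mul, one_mul, zero_mul]
  simp [Finset.sum_ite_eq']

lemma eb_state {d : ℕ} (k : Fin d) : IsState (pureState (eb k)) := by
  refine ⟨pureState_posSemidef _, ?_⟩
  simp [pureState, Matrix.trace, Matrix.diag, vecMulVec_apply, eb, apply_ite,
    Finset.sum_ite_eq]

lemma tval_eb {d : ℕ} (k : Fin d) : tval (pureState (eb k)) (eb k) = 1 := by
  unfold tval pureState eb
  simp only [vecMulVec_apply, Pi.star_apply, apply_ite (star : ℂ → ℂ), star_one, star_zero]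
  simp [ite_mul, mul_ite, Finset.sum_ite_eq]

lemma sval_eb {d : ℕ} (k : Fin d) : sval (pureState (eb k)) = 1 := by
  unfold sval pureState eb
  simp only [vecMulVec_apply, Pi.star_apply, apply_ite (star : ℂ → ℂ), star_one, star_zero]
  simp [ite_mul, mul_ite, apply_ite Complex.normSq, Finset.sum_ite_eq]

end Stmt6Aux


open Stmt6Aux in
theorem stmt6 {d : ℕ} (hd : 2 ≤ d) :
    Dg (pureState (fun p : Fin d × Fin d =>
        if p.1 = p.2 then (((Real.sqrt d)⁻¹ : ℝ) : ℂ) else 0)) = ((d : ℝ) - 1) / d := by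
  have hd0 : 0 < d := lt_of_lt_of_le (by norm_num) hd
  have hdR : (0 : ℝ) < d := Nat.cast_pos.mpr hd0
  have hψ : (fun p : Fin d × Fin d =>
      if p.1 = p.2 then (((Real.sqrt d)⁻¹ : ℝ) : ℂ) else 0) = ψv d := rfl
  rw [hψ]
  unfold Dg
  set ρ := pureState (ψv d) with hρ
  set S : Set ℝ := {x : ℝ | ∃ χ, IsQCState χ ∧ x = (((ρ - χ) * (ρ - χ)).trace).re} with hS
  -- the witness value
  have hval : ((d : ℝ) - 1) / d
      = (((ρ - ∑ k : Fin d, (((d : ℝ)⁻¹ : ℝ) : ℂ) • (pureState (eb k) ⊗ₖ pureState (eb k))) *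
          (ρ - ∑ k : Fin d, (((d : ℝ)⁻¹ : ℝ) : ℂ) • (pureState (eb k) ⊗ₖ pureState (eb k)))).trace).re := by
    rw [hρ, expansion hd0 (fun _ => (d : ℝ)⁻¹) (fun k => pureState (eb k)) eb
      (fun k => (pureState_posSemidef _).1) he_basis]
    simp_rw [tval_eb, sval_eb, Complex.one_re, mul_one]
    rw [Finset.sum_const, Finset.sum_const, Finset.card_univ, Fintype.card_fin, nsmul_eq_mul,
      nsmul_eq_mul]
    field_simp
    ring
  have hmem : ((d : ℝ) - 1) / d ∈ S := by
    refine ⟨∑ k : Fin d, (((d : ℝ)⁻¹ : ℝ) : ℂ) • (pureState (eb k) ⊗ₖ pureState (eb k)),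
      ⟨fun _ => (d : ℝ)⁻¹, fun k => pureState (eb k), eb, fun _ => by positivity, ?_,
        eb_state, he_basis, rfl⟩, hval⟩
    rw [Finset.sum_const, Finset.card_univ, Fintype.card_fin, nsmul_eq_mul]
    field_simp
  have hlb : ∀ x ∈ S, ((d : ℝ) - 1) / d ≤ x := by
    rintro x ⟨χ, ⟨α, σ, e, hα, hαsum, hstate, he, hχeq⟩, rfl⟩
    rw [hχeq, hρ, expansion hd0 α σ e (fun k => (hstate k).1.1) he]
    exact lowbd hd0 α σ e hα he
  exact le_antisymm (csInf_le ⟨((d : ℝ) - 1) / d, hlb⟩ hmem) (le_csInf ⟨_, hmem⟩ hlb)
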